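/- The limit as n → ∞ of (Σ_{k=1}^n log(4k² + 4k + 7)) / (Σ_{k=1}^n log(4k + 7)) equals 2. -/

import Mathlib

open Filter Finset Asymptotics Real

private lemma sum_Icc_one (F : ℕ → ℝ) (n : ℕ) :
    ∑ k ∈ Finset.Icc 1 n, F k = ∑ i ∈ Finset.range n, F (i + 1) := by
  induction n with
  | zero => simp
  | succ n ih =>
      rw [Finset.sum_Icc_succ_top (by omega), ih, Finset.sum_range_succ]

private lemma gdef_pos (i : ℕ) : 0 < Real.log (4 * ((i : ℝ) + 1) + 7) := by
  apply Real.log_pos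
  have : (0 : ℝ) ≤ (i : ℝ) := Nat.cast_nonneg i
  nlinarith

private lemma g_atTop :
    Tendsto (fun i : ℕ => Real.log (4 * ((i : ℝ) + 1) + 7)) atTop atTop := by
  apply Real.tendsto_log_atTop.comp
  apply tendsto_atTop_add_const_right
  apply Tendsto.const_mul_atTop (by norm_num : (0:ℝ) < 4)
  exact tendsto_atTop_add_const_right _ _ tendsto_natCast_atTop_atTop

private lemma sumg_atTop :
    Tendsto (fun n : ℕ => ∑ i ∈ Finset.range n, Real.log (4 * ((i : ℝ) + 1) + 7))
      atTop atTop := by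
  apply tendsto_atTop_mono (fun n => ?_)
    (Tendsto.atTop_mul_const (Real.log_pos (by norm_num : (1:ℝ) < 11))
      tendsto_natCast_atTop_atTop)
  calc (n : ℝ) * Real.log 11 = ∑ _i ∈ Finset.range n, Real.log 11 := by
        simp [mul_comm]
    _ ≤ ∑ i ∈ Finset.range n, Real.log (4 * ((i : ℝ) + 1) + 7) := by
        apply Finset.sum_le_sum
        intro i _
        apply Real.log_le_log (by norm_num)
        have : (0 : ℝ) ≤ (i : ℝ) := Nat.cast_nonneg i
        nlinarith

theorem stmt_16 :
    Filter.Tendsto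
      (fun n : ℕ =>
        (∑ k ∈ Finset.Icc 1 n, Real.log (4 * (k : ℝ) ^ 2 + 4 * k + 7)) /
        (∑ k ∈ Finset.Icc 1 n, Real.log (4 * (k : ℝ) + 7)))
      Filter.atTop (nhds 2) := by
  set g : ℕ → ℝ := fun i => Real.log (4 * ((i : ℝ) + 1) + 7) with hg
  set f : ℕ → ℝ := fun i =>
    Real.log (4 * ((i : ℝ) + 1) ^ 2 + 4 * ((i : ℝ) + 1) + 7) - 2 * g i with hf
  have hm : ∀ i : ℕ, (0 : ℝ) ≤ (i : ℝ) := fun i => Nat.cast_nonneg i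
  have hgpos : ∀ i, 0 < g i := gdef_pos
  have hbound : ∀ i, |f i| ≤ Real.log 9 := by
    intro i
    have h0 := hm i
    set m : ℝ := (i : ℝ) + 1 with hmdef
    have hmpos : (0 : ℝ) < m := by nlinarith
    have hsq : 2 * Real.log (4 * m + 7) = Real.log ((4 * m + 7) ^ 2) := by
      rw [Real.log_pow]; norm_num
    have hupper : Real.log (4 * m ^ 2 + 4 * m + 7) ≤ 2 * Real.log (4 * m + 7) := by
      rw [hsq]
      apply Real.log_le_log (by nlinarith)
      nlinarith
    have hlower : 2 * Real.log (4 * m + 7) - Real.log 9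
        ≤ Real.log (4 * m ^ 2 + 4 * m + 7) := by
      rw [hsq, ← Real.log_div (by positivity) (by norm_num)]
      apply Real.log_le_log (by positivity)
      rw [div_le_iff₀ (by norm_num : (0:ℝ) < 9)]
      nlinarith
    rw [abs_le]
    exact ⟨by simp only [hf, hg]; nlinarith [hlower], by simp only [hf, hg]; nlinarith [hupper]⟩
  have hfo : f =o[atTop] g := by
    have h1 : f =O[atTop] (fun _ : ℕ => (1 : ℝ)) := by
      rw [isBigO_iff]
      exact ⟨Real.log 9, Filter.Eventually.of_forall fun i => by simpa using hbound i⟩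
    have h2 : (fun _ : ℕ => (1 : ℝ)) =o[atTop] g := by
      apply isLittleO_const_left.2
      right
      exact g_atTop.congr fun i => (Real.norm_of_nonneg (hgpos i).le).symm
    exact h1.trans_isLittleO h2
  have hsum : (fun n => ∑ i ∈ Finset.range n, f i)
      =o[atTop] fun n => ∑ i ∈ Finset.range n, g i :=
    hfo.sum_range (fun i => (hgpos i).le) sumg_atTop
  have hdiv : Tendsto
      (fun n => (∑ i ∈ Finset.range n, f i) / (∑ i ∈ Finset.range n, g i))
      atTop (nhds 0) := hsum.tendsto_div_nhds_zero
  have hfin : Tendsto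
      (fun n => (∑ i ∈ Finset.range n, f i) / (∑ i ∈ Finset.range n, g i) + 2)
      atTop (nhds 2) := by
    simpa using hdiv.add tendsto_const_nhds
  apply hfin.congr'
  filter_upwards [Ici_mem_atTop 1] with n hn
  have hne : (∑ i ∈ Finset.range n, g i) ≠ 0 := by
    apply ne_of_gt
    apply Finset.sum_pos (fun i _ => hgpos i)
    exact Finset.nonempty_range_iff.2 (Nat.one_le_iff_ne_zero.mp hn)
  have hnum : (∑ k ∈ Finset.Icc 1 n, Real.log (4 * (k : ℝ) ^ 2 + 4 * k + 7))
      = (∑ i ∈ Finset.range n, f i) + 2 * ∑ i ∈ Finset.range n, g i := by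
    rw [sum_Icc_one, Finset.mul_sum, ← Finset.sum_add_distrib]
    apply Finset.sum_congr rfl
    intro i _
    simp only [hf, hg]
    push_cast
    ring
  have hden : (∑ k ∈ Finset.Icc 1 n, Real.log (4 * (k : ℝ) + 7))
      = ∑ i ∈ Finset.range n, g i := by
    rw [sum_Icc_one]
    apply Finset.sum_congr rfl
    intro i _
    simp only [hg]
    push_cast
    ring_nf
  rw [hnum, hden, add_div, mul_div_assoc, div_self hne, mul_one]
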